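/- (Proposition 2, Engel's theorem for Leibniz algebras) Let L be a finite-dimensional left Leibniz algebra over a field k of characteristic 0. If for every x ∈ L the left multiplication operator l_x is nilpotent, then L is a nilpotent Leibniz algebra. -/

import Mathlib

/-
Basic notions for (left) Leibniz algebras, given by a bilinear bracket
`β : M →ₗ[k] M →ₗ[k] M` on a `k`-vector space `M`.
-/

section LeibnizDefs

variable {k : Type*} [Field k] {M : Type*} [AddCommGroup M] [Module k M]

/-- `[A, B]`: the linear span of brackets of elements of two subspaces. -/
def bracketSpan (β : M →ₗ[k] M →ₗ[k] M) (A B : Submodule k M) : Submodule k M :=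
  Submodule.span k {z : M | ∃ a ∈ A, ∃ b ∈ B, z = β a b}

/-- Derived series of a subspace `I`: `D^0 = I`, `D^{n+1} = [D^n, D^n]`. -/
def derivedSeriesOf (β : M →ₗ[k] M →ₗ[k] M) (I : Submodule k M) : ℕ → Submodule k M
  | 0 => I
  | n + 1 => bracketSpan β (derivedSeriesOf β I n) (derivedSeriesOf β I n)

/-- Lower central series of a subspace `I`: `C^0 = I`, `C^{n+1} = [I, C^n]`. -/
def lowerCentralSeriesOf (β : M →ₗ[k] M →ₗ[k] M) (I : Submodule k M) : ℕ → Submodule k M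
  | 0 => I
  | n + 1 => bracketSpan β I (lowerCentralSeriesOf β I n)

/-- A two-sided ideal. -/
def LeibnizIdeal (β : M →ₗ[k] M →ₗ[k] M) (I : Submodule k M) : Prop :=
  (∀ x : M, ∀ u ∈ I, β x u ∈ I) ∧ (∀ u ∈ I, ∀ x : M, β u x ∈ I)

/-- A subspace is solvable if its derived series reaches `0`. -/
def LeibnizSolvable (β : M →ₗ[k] M →ₗ[k] M) (I : Submodule k M) : Prop :=
  ∃ n, derivedSeriesOf β I n = ⊥

/-- A subspace is nilpotent if its lower central series reaches `0`. -/
def LeibnizNilpotent (β : M →ₗ[k] M →ₗ[k] M) (I : Submodule k M) : Prop :=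
  ∃ n, lowerCentralSeriesOf β I n = ⊥

/-- A subalgebra: a subspace closed under the bracket. -/
def LeibnizSubalgebra (β : M →ₗ[k] M →ₗ[k] M) (S : Submodule k M) : Prop :=
  ∀ u ∈ S, ∀ v ∈ S, β u v ∈ S

end LeibnizDefs

/-- Engel's theorem for Leibniz algebras: if all left multiplications are nilpotent
operators, then the algebra is nilpotent. -/
theorem stmt_6 {k : Type*} [Field k] [CharZero k] {L : Type*} [AddCommGroup L] [Module k L]
    [FiniteDimensional k L] (β : L →ₗ[k] L →ₗ[k] L)
    (leib : ∀ x y z : L, β x (β y z) = β (β x y) z + β y (β x z))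
    (hnil : ∀ x : L, IsNilpotent (β x : Module.End k L)) :
    LeibnizNilpotent β (⊤ : Submodule k L) := by
  letI : LieRing (Module.End k L) := LieRing.ofAssociativeRing
  let S : LieSubalgebra k (Module.End k L) :=
    { LinearMap.range β with
      lie_mem' := by
        rintro _ _ ⟨x, rfl⟩ ⟨y, rfl⟩
        refine ⟨β x y, ?_⟩
        ext z
        simp only [Ring.lie_def, LinearMap.sub_apply, Module.End.mul_apply]
        rw [leib x y z]
        abel }
  have hS : ∀ x : S, IsNilpotent (LieModule.toEnd k S L x) := by
    rintro ⟨f, y, rfl⟩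
    obtain ⟨n, hn⟩ := hnil y
    refine ⟨n, ?_⟩
    ext z
    have : ∀ m w, ((LieModule.toEnd k S L ⟨β y, ⟨y, rfl⟩⟩) ^ m) w = ((β y : Module.End k L) ^ m) w := by
      intro m
      induction m with
      | zero => intro w; rfl
      | succ m ih =>
        intro w
        rw [pow_succ, pow_succ, Module.End.mul_apply, Module.End.mul_apply, ih]
        rfl
    rw [this n z, hn]
  have hnilp : LieModule.IsNilpotent S L := (LieModule.isNilpotent_iff_forall' (R := k)).mpr hS
  obtain ⟨n, hn⟩ := (LieModule.isNilpotent_iff k S L).mp hnilp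
  refine ⟨n, ?_⟩
  have key : ∀ m, lowerCentralSeriesOf β ⊤ m ≤ (LieModule.lowerCentralSeries k S L m : Submodule k L) := by
    intro m
    induction m with
    | zero => simp [lowerCentralSeriesOf]
    | succ m ih =>
      show bracketSpan β ⊤ (lowerCentralSeriesOf β ⊤ m) ≤ _
      rw [bracketSpan]
      apply Submodule.span_le.mpr
      rintro _ ⟨a, -, b, hb, rfl⟩
      have hmem : b ∈ LieModule.lowerCentralSeries k S L m := ih hb
      have : β a b = ⁅(⟨β a, ⟨a, rfl⟩⟩ : S), b⁆ := rfl
      rw [this, LieModule.lowerCentralSeries_succ]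
      exact LieSubmodule.lie_mem_lie (LieSubmodule.mem_top _) hmem
  have := key n
  rw [hn] at this
  exact le_bot_iff.mp (le_trans this (by simp))
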